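/- Let n ≥ 1 and u, v ∈ S_n. If ℓ(uv) = ℓ(u) + ℓ(v), then ∂_u ∘ ∂_v = ∂_{uv} as operators on ℚ[x_1,…,x_n]; if ℓ(uv) < ℓ(u) + ℓ(v), then ∂_u ∘ ∂_v = 0. -/

import Mathlib

open MvPolynomial
open scoped Classical

/-- The Coxeter length of a permutation of `Fin n`, i.e. its number of inversions. -/
def permLen {n : ℕ} (w : Equiv.Perm (Fin n)) : ℕ :=
  (Finset.univ.filter (fun p : Fin n × Fin n => p.1 < p.2 ∧ w p.2 < w p.1)).card

/-- The adjacent transposition `s_i` exchanging the `i`-th and `(i+1)`-th letters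
(zero-indexed); junk value `1` if out of range. -/
def adjSwap (n : ℕ) (i : ℕ) : Equiv.Perm (Fin n) :=
  if h : i + 1 < n then Equiv.swap ⟨i, Nat.lt_of_succ_lt h⟩ ⟨i + 1, h⟩ else 1

/-- The longest element `w₀` of the symmetric group on `Fin n`, `i ↦ n - 1 - i`
(one-indexed: `i ↦ n + 1 - i`). -/
def w0 (n : ℕ) : Equiv.Perm (Fin n) := Fin.revPerm

/-- The Demazure (divided difference) operator with respect to a pair of variables `i j`:
`f ↦ (f - swap(i,j)·f) / (Xᵢ - Xⱼ)`.  The difference is always divisible by `Xᵢ - Xⱼ`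
(for `i ≠ j`), and the quotient is unique since the polynomial ring is a domain, so the
definition by choice below produces exactly this quotient. -/
noncomputable def demazure {σ : Type} [DecidableEq σ] (i j : σ)
    (f : MvPolynomial σ ℚ) : MvPolynomial σ ℚ :=
  if h : ∃ g, f - rename (Equiv.swap i j) f = (X i - X j) * g then h.choose else 0

/-- The Demazure operator `∂ᵢ` on `ℚ[x₀, …, x_{n-1}]` (zero-indexed). -/
noncomputable def demAt (n : ℕ) (i : ℕ) :
    MvPolynomial (Fin n) ℚ → MvPolynomial (Fin n) ℚ :=
  if h : i + 1 < n then demazure ⟨i, Nat.lt_of_succ_lt h⟩ ⟨i + 1, h⟩ else fun _ => 0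

/-- The composite Demazure operator `∂_{i₁} ∘ ⋯ ∘ ∂_{i_r}` along a word `l = [i₁, …, i_r]`. -/
noncomputable def demWord (n : ℕ) (l : List ℕ) :
    MvPolynomial (Fin n) ℚ → MvPolynomial (Fin n) ℚ :=
  l.foldr (fun i op => demAt n i ∘ op) id

/-- `l = [i₁, …, i_r]` is a reduced word for `w` if all letters are in range,
`s_{i₁} ⋯ s_{i_r} = w`, and `r = ℓ(w)` is the number of inversions of `w`. -/
def IsReducedWord (n : ℕ) (w : Equiv.Perm (Fin n)) (l : List ℕ) : Prop :=
  (∀ i ∈ l, i + 1 < n) ∧ (l.map (adjSwap n)).prod = w ∧ l.length = permLen w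

/-- The Demazure operator `∂_w`, defined along a chosen reduced word of `w`
(the result is independent of this choice). -/
noncomputable def demazureOf (n : ℕ) (w : Equiv.Perm (Fin n)) :
    MvPolynomial (Fin n) ℚ → MvPolynomial (Fin n) ℚ :=
  if h : ∃ l, IsReducedWord n w l then demWord n h.choose else fun _ => 0

/-- The Demazure operator `∂ᵢˣ` acting on the `x`-variables (the left summand) of
`ℚ[x₁, …, xₙ, t₁, …, tₙ]`. -/
noncomputable def demAtX (n : ℕ) (i : ℕ) :
    MvPolynomial (Fin n ⊕ Fin n) ℚ → MvPolynomial (Fin n ⊕ Fin n) ℚ :=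
  if h : i + 1 < n then
    demazure (Sum.inl ⟨i, Nat.lt_of_succ_lt h⟩) (Sum.inl ⟨i + 1, h⟩) else fun _ => 0

/-- Composite of `x`-variable Demazure operators along a word. -/
noncomputable def demWordX (n : ℕ) (l : List ℕ) :
    MvPolynomial (Fin n ⊕ Fin n) ℚ → MvPolynomial (Fin n ⊕ Fin n) ℚ :=
  l.foldr (fun i op => demAtX n i ∘ op) id

/-- The Demazure operator `∂_wˣ` in the `x`-variables, along a chosen reduced word of `w`. -/
noncomputable def demazureOfX (n : ℕ) (w : Equiv.Perm (Fin n)) :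
    MvPolynomial (Fin n ⊕ Fin n) ℚ → MvPolynomial (Fin n ⊕ Fin n) ℚ :=
  if h : ∃ l, IsReducedWord n w l then demWordX n h.choose else fun _ => 0

/-- The top product `∏_{i + j ≤ n} (xᵢ - tⱼ)` (one-indexed), i.e. the double Schubert
polynomial of the longest element. -/
noncomputable def schubProd (n : ℕ) : MvPolynomial (Fin n ⊕ Fin n) ℚ :=
  ∏ p ∈ Finset.univ.filter (fun p : Fin n × Fin n => (p.1 : ℕ) + (p.2 : ℕ) + 2 ≤ n),
    (X (Sum.inl p.1) - X (Sum.inr p.2))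

/-- The double Schubert polynomial `𝔖_w(x, t) = ∂ˣ_{w⁻¹w₀} (∏_{i+j≤n} (xᵢ - tⱼ))`. -/
noncomputable def schubert (n : ℕ) (w : Equiv.Perm (Fin n)) :
    MvPolynomial (Fin n ⊕ Fin n) ℚ :=
  demazureOfX n (w⁻¹ * w0 n) (schubProd n)


set_option linter.deprecated false
set_option linter.unusedSectionVars false

section DemBasic
variable {σ : Type} [DecidableEq σ]

lemma swap_ex (i j : σ) (f : MvPolynomial σ ℚ) :
    ∃ g, f - rename (Equiv.swap i j) f = (X i - X j) * g := by
  suffices h : (X i - X j : MvPolynomial σ ℚ) ∣ (f - rename (Equiv.swap i j) f) from h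
  induction f using MvPolynomial.induction_on with
  | C a => simp
  | add p q hp hq =>
      have := dvd_add hp hq
      rw [map_add] at *
      convert this using 1; ring
  | mul_X p k hp =>
      rw [map_mul, rename_X]
      have hid : p * X k - rename (Equiv.swap i j) p * X ((Equiv.swap i j) k)
          = (p - rename (Equiv.swap i j) p) * X k
            + rename (Equiv.swap i j) p * (X k - X ((Equiv.swap i j) k)) := by ring
      rw [hid]
      refine dvd_add (Dvd.dvd.mul_right hp _) (Dvd.dvd.mul_left ?_ _)
      by_cases hki : k = i
      · subst hki; rw [Equiv.swap_apply_left]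
      · by_cases hkj : k = j
        · subst hkj
          rw [Equiv.swap_apply_right, ← neg_sub (X i) (X k)]
          exact dvd_neg.2 dvd_rfl
        · rw [Equiv.swap_apply_of_ne_of_ne hki hkj, sub_self]
          exact dvd_zero _

lemma dem_spec (i j : σ) (f : MvPolynomial σ ℚ) :
    (X i - X j) * demazure i j f = f - rename (Equiv.swap i j) f := by
  rw [demazure, dif_pos (swap_ex i j f)]
  exact ((swap_ex i j f).choose_spec).symm

set_option linter.unusedSectionVars false in
lemma X_sub_ne (h : i ≠ j) : (X i - X j : MvPolynomial σ ℚ) ≠ 0 := by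
  intro hc
  exact h (X_injective.eq_iff.mp (sub_eq_zero.mp hc))

lemma dem_unique {i j : σ} (h : i ≠ j) {f g : MvPolynomial σ ℚ}
    (hg : (X i - X j) * g = f - rename (Equiv.swap i j) f) : demazure i j f = g :=
  mul_left_cancel₀ (X_sub_ne h) (by rw [dem_spec, hg])

lemma rename_swap_swap (i j : σ) (f : MvPolynomial σ ℚ) :
    rename (Equiv.swap i j) (rename (Equiv.swap i j) f) = f := by
  rw [rename_rename]
  have : (⇑(Equiv.swap i j) ∘ ⇑(Equiv.swap i j)) = id := by
    funext x; simp [Equiv.swap_apply_self]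
  rw [this, rename_id, AlgHom.id_apply]

lemma dem_invariant {i j : σ} (h : i ≠ j) (f : MvPolynomial σ ℚ) :
    rename (Equiv.swap i j) (demazure i j f) = demazure i j f := by
  have e := dem_spec i j f
  have e2 := congrArg (rename (Equiv.swap i j)) e
  rw [map_mul, map_sub, map_sub, rename_X, rename_X, Equiv.swap_apply_left,
    Equiv.swap_apply_right, rename_swap_swap] at e2
  -- e2 : (X j - X i) * rename swap (dem) = rename swap f - f
  have e3 : (X i - X j) * rename (Equiv.swap i j) (demazure i j f)
      = (X i - X j) * demazure i j f := by
    rw [e]; linear_combination -e2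
  exact mul_left_cancel₀ (X_sub_ne h) e3

lemma dem_of_invariant {i j : σ} (h : i ≠ j) {f : MvPolynomial σ ℚ}
    (hf : rename (Equiv.swap i j) f = f) : demazure i j f = 0 :=
  dem_unique h (by rw [hf]; ring)

lemma dem_dem (h : i ≠ j) (f : MvPolynomial σ ℚ) :
    demazure i j (demazure i j f) = 0 :=
  dem_of_invariant h (dem_invariant h f)

lemma dem_zero (h : i ≠ j) : demazure i j (0 : MvPolynomial σ ℚ) = 0 :=
  dem_unique h (by simp)

end DemBasic

lemma demAt_eq {n i : ℕ} (hi : i + 1 < n) :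
    demAt n i = demazure ⟨i, Nat.lt_of_succ_lt hi⟩ ⟨i + 1, hi⟩ := dif_pos hi

lemma demAt_apply {n i : ℕ} (hi : i + 1 < n) (f : MvPolynomial (Fin n) ℚ) :
    demAt n i f = demazure ⟨i, Nat.lt_of_succ_lt hi⟩ ⟨i + 1, hi⟩ f := by
  rw [demAt_eq hi]

lemma demAt_out {n i : ℕ} (hi : ¬ i + 1 < n) :
    demAt n i = fun _ => (0 : MvPolynomial (Fin n) ℚ) := dif_neg hi

lemma swap_fn_comm {α} [DecidableEq α] {a b c d : α} (hac : a≠c) (had : a≠d)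
    (hbc : b≠c) (hbd : b≠d) (x : α) :
    Equiv.swap a b (Equiv.swap c d x) = Equiv.swap c d (Equiv.swap a b x) := by
  simp only [Equiv.swap_apply_def]
  split_ifs <;> simp_all

lemma swap_fn_braid {α} [DecidableEq α] {a b c : α} (hab : a≠b) (hbc : b≠c) (hac : a≠c) (x : α) :
    Equiv.swap a b (Equiv.swap b c (Equiv.swap a b x)) =
      Equiv.swap b c (Equiv.swap a b (Equiv.swap b c x)) := by
  rcases eq_or_ne x a with rfl|hxa
  · simp [Equiv.swap_apply_of_ne_of_ne, hab, hbc, hac, hab.symm, hbc.symm, hac.symm]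
  rcases eq_or_ne x b with rfl|hxb
  · simp [Equiv.swap_apply_of_ne_of_ne, hab, hbc, hac, hab.symm, hbc.symm, hac.symm]
  rcases eq_or_ne x c with rfl|hxc
  · simp [Equiv.swap_apply_of_ne_of_ne, hab, hbc, hac, hab.symm, hbc.symm, hac.symm]
  · simp [Equiv.swap_apply_of_ne_of_ne, hxa, hxb, hxc]

section Rel
variable {n : ℕ}

lemma demAt_zero (i : ℕ) : demAt n i 0 = 0 := by
  rw [demAt]
  split
  · rename_i h
    exact dem_zero (by simp [Fin.ext_iff])
  · rfl

/-- `∂ᵢ ∘ ∂ᵢ = 0` pointwise. -/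
lemma demAt_demAt (i : ℕ) (f : MvPolynomial (Fin n) ℚ) : demAt n i (demAt n i f) = 0 := by
  by_cases hi : i + 1 < n
  · rw [demAt_apply hi, demAt_apply hi]
    exact dem_dem (by simp [Fin.ext_iff]) f
  · rw [demAt, dif_neg hi]

/-- Commutation relation for distant Demazure operators. -/
lemma demAt_comm {i k : ℕ} (hik : i + 1 < k ∨ k + 1 < i) (f : MvPolynomial (Fin n) ℚ) :
    demAt n i (demAt n k f) = demAt n k (demAt n i f) := by
  by_cases hi : i + 1 < n
  · by_cases hk : k + 1 < n
    · set a : Fin n := ⟨i, Nat.lt_of_succ_lt hi⟩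
      set b : Fin n := ⟨i + 1, hi⟩
      set c : Fin n := ⟨k, Nat.lt_of_succ_lt hk⟩
      set d : Fin n := ⟨k + 1, hk⟩
      have hab : a ≠ b := by simp [a, b, Fin.ext_iff]
      have hcd : c ≠ d := by simp [c, d, Fin.ext_iff]
      have hac : a ≠ c := by simp [a, c, Fin.ext_iff]; omega
      have had : a ≠ d := by simp [a, d, Fin.ext_iff]; omega
      have hbc : b ≠ c := by simp [b, c, Fin.ext_iff]; omega
      have hbd : b ≠ d := by simp [b, d, Fin.ext_iff]; omega
      rw [demAt_apply hi, demAt_apply hk, demAt_apply hi, demAt_apply hk]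
      set σ : MvPolynomial (Fin n) ℚ →ₐ[ℚ] MvPolynomial (Fin n) ℚ := rename (Equiv.swap a b)
      set τ : MvPolynomial (Fin n) ℚ →ₐ[ℚ] MvPolynomial (Fin n) ℚ := rename (Equiv.swap c d)
      have hσc : σ (X c) = X c := by
        rw [rename_X, Equiv.swap_apply_of_ne_of_ne hac.symm hbc.symm]
      have hσd : σ (X d) = X d := by
        rw [rename_X, Equiv.swap_apply_of_ne_of_ne had.symm hbd.symm]
      have hτa : τ (X a) = X a := by
        rw [rename_X, Equiv.swap_apply_of_ne_of_ne hac had]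
      have hτb : τ (X b) = X b := by
        rw [rename_X, Equiv.swap_apply_of_ne_of_ne hbc hbd]
      have hcomm : σ (τ f) = τ (σ f) := by
        show rename _ (rename _ f) = rename _ (rename _ f)
        rw [rename_rename, rename_rename,
          show (⇑(Equiv.swap a b) ∘ ⇑(Equiv.swap c d)) = (⇑(Equiv.swap c d) ∘ ⇑(Equiv.swap a b))
            from funext (swap_fn_comm hac had hbc hbd)]
      have e1 : (X c - X d) * demazure c d f = f - τ f := dem_spec c d f
      have e2 : (X a - X b) * demazure a b (demazure c d f)
          = demazure c d f - σ (demazure c d f) := dem_spec a b _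
      have e3 : (X a - X b) * demazure a b f = f - σ f := dem_spec a b f
      have e4 : (X c - X d) * demazure c d (demazure a b f)
          = demazure a b f - τ (demazure a b f) := dem_spec c d _
      have eσ : (X c - X d) * σ (demazure c d f) = σ f - σ (τ f) := by
        have := congrArg σ e1
        rw [map_mul, map_sub, map_sub, hσc, hσd] at this
        exact this
      have eτ : (X a - X b) * τ (demazure a b f) = τ f - τ (σ f) := by
        have := congrArg τ e3
        rw [map_mul, map_sub, map_sub, hτa, hτb] at this
        exact this
      refine mul_left_cancel₀ (X_sub_ne hab) (mul_left_cancel₀ (X_sub_ne hcd) ?_)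
      linear_combination (X c - X d) * e2 + e1 - eσ - (X a - X b) * e4 - e3 + eτ + hcomm
    · rw [demAt_out hk]
      simp [demAt_zero]
  · rw [demAt_out hi]
    simp [demAt_zero]

/-- Braid relation for adjacent Demazure operators. -/
lemma demAt_braid (i : ℕ) (f : MvPolynomial (Fin n) ℚ) :
    demAt n i (demAt n (i+1) (demAt n i f)) = demAt n (i+1) (demAt n i (demAt n (i+1) f)) := by
  by_cases hi2 : i + 2 < n
  · have hi : i + 1 < n := by omega
    set a : Fin n := ⟨i, by omega⟩
    set b : Fin n := ⟨i + 1, hi⟩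
    set c : Fin n := ⟨i + 2, hi2⟩
    have hab : a ≠ b := by simp [a, b, Fin.ext_iff]
    have hbc : b ≠ c := by simp [b, c, Fin.ext_iff]
    have hac : a ≠ c := by simp [a, c, Fin.ext_iff]
    rw [demAt_eq hi, demAt_eq (show (i + 1) + 1 < n from hi2)]
    show demazure a b (demazure b c (demazure a b f))
      = demazure b c (demazure a b (demazure b c f))
    set s : MvPolynomial (Fin n) ℚ →ₐ[ℚ] MvPolynomial (Fin n) ℚ := rename (Equiv.swap a b)
    set t : MvPolynomial (Fin n) ℚ →ₐ[ℚ] MvPolynomial (Fin n) ℚ := rename (Equiv.swap b c)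
    have hsa : s (X a) = X b := by rw [rename_X, Equiv.swap_apply_left]
    have hsb : s (X b) = X a := by rw [rename_X, Equiv.swap_apply_right]
    have hsc : s (X c) = X c := by
      rw [rename_X, Equiv.swap_apply_of_ne_of_ne hac.symm hbc.symm]
    have hta : t (X a) = X a := by
      rw [rename_X, Equiv.swap_apply_of_ne_of_ne hab hac]
    have htb : t (X b) = X c := by rw [rename_X, Equiv.swap_apply_left]
    have htc : t (X c) = X b := by rw [rename_X, Equiv.swap_apply_right]
    have hbraid : s (t (s f)) = t (s (t f)) := by
      show rename _ (rename _ (rename _ f)) = rename _ (rename _ (rename _ f))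
      rw [rename_rename, rename_rename, rename_rename, rename_rename,
        show ((⇑(Equiv.swap a b) ∘ ⇑(Equiv.swap b c)) ∘ ⇑(Equiv.swap a b))
            = ((⇑(Equiv.swap b c) ∘ ⇑(Equiv.swap a b)) ∘ ⇑(Equiv.swap b c))
          from funext (swap_fn_braid hab hbc hac)]
    set g1 := demazure a b f
    set g2 := demazure b c g1
    set g3 := demazure a b g2
    set g1' := demazure b c f
    set g2' := demazure a b g1'
    set g3' := demazure b c g2'
    have e1 : (X a - X b) * g1 = f - s f := dem_spec a b f
    have e2 : (X b - X c) * g2 = g1 - t g1 := dem_spec b c g1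
    have e3 : (X a - X b) * g3 = g2 - s g2 := dem_spec a b g2
    have e1' : (X b - X c) * g1' = f - t f := dem_spec b c f
    have e2' : (X a - X b) * g2' = g1' - s g1' := dem_spec a b g1'
    have e3' : (X b - X c) * g3' = g2' - t g2' := dem_spec b c g2'
    have hsg1 : s g1 = g1 := dem_invariant hab f
    have htg1' : t g1' = g1' := dem_invariant hbc f
    have tg1 : (X a - X c) * t g1 = t f - t (s f) := by
      have := congrArg t e1
      rw [map_mul, map_sub, map_sub, hta, htb] at this
      exact this
    have stg1 : (X b - X c) * s (t g1) = s (t f) - s (t (s f)) := by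
      have := congrArg s tg1
      rw [map_mul, map_sub, map_sub, hsa, hsc] at this
      exact this
    have sg2 : (X a - X c) * s g2 = g1 - s (t g1) := by
      have := congrArg s e2
      rw [map_mul, map_sub, map_sub, hsb, hsc, hsg1] at this
      exact this
    have sg1' : (X a - X c) * s g1' = s f - s (t f) := by
      have := congrArg s e1'
      rw [map_mul, map_sub, map_sub, hsb, hsc] at this
      exact this
    have tsg1' : (X a - X b) * t (s g1') = t (s f) - t (s (t f)) := by
      have := congrArg t sg1'
      rw [map_mul, map_sub, map_sub, hta, htc] at this
      exact this
    have tg2' : (X a - X c) * t g2' = g1' - t (s g1') := by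
      have := congrArg t e2'
      rw [map_mul, map_sub, map_sub, hta, htb, htg1'] at this
      exact this
    have key : ((X a - X b) * ((X a - X c) * (X b - X c))) * g3
        = ((X a - X b) * ((X a - X c) * (X b - X c))) * g3' := by
      have c1 : ((X a - X b) * ((X a - X c) * (X b - X c))) * g3
          = f - s f - t f + t (s f) + s (t f) - s (t (s f)) := by
        linear_combination (X a - X c) * (X b - X c) * e3 + (X a - X c) * e2
          - (X b - X c) * sg2 - tg1 + stg1 + e1
      have c2 : ((X a - X b) * ((X a - X c) * (X b - X c))) * g3'
          = f - t f - s f + s (t f) + t (s f) - t (s (t f)) := by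
        linear_combination (X a - X b) * (X a - X c) * e3' + (X a - X c) * e2'
          - (X a - X b) * tg2' - sg1' + tsg1' + e1'
      rw [c1, c2, hbraid]
      ring
    have hne : ((X a - X b) * ((X a - X c) * (X b - X c)) : MvPolynomial (Fin n) ℚ) ≠ 0 :=
      mul_ne_zero (X_sub_ne hab) (mul_ne_zero (X_sub_ne hac) (X_sub_ne hbc))
    exact mul_left_cancel₀ hne key
  · have h2 : ¬ ((i + 1) + 1 < n) := by omega
    rw [demAt_out h2]
    simp [demAt_zero]

section PermLen
variable {n : ℕ}

lemma adjSwap_eq {i : ℕ} (hi : i + 1 < n) :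
    adjSwap n i = Equiv.swap ⟨i, Nat.lt_of_succ_lt hi⟩ ⟨i + 1, hi⟩ := dif_pos hi

lemma adjSwap_mul_self {i : ℕ} : adjSwap n i * adjSwap n i = 1 := by
  by_cases hi : i + 1 < n
  · rw [adjSwap_eq hi, Equiv.swap_mul_self]
  · rw [adjSwap, dif_neg hi, one_mul]

lemma adjSwap_inv {i : ℕ} : (adjSwap n i)⁻¹ = adjSwap n i :=
  inv_eq_of_mul_eq_one_right adjSwap_mul_self

lemma adjSwap_apply_fst {i : ℕ} (hi : i + 1 < n) :
    adjSwap n i ⟨i, Nat.lt_of_succ_lt hi⟩ = ⟨i + 1, hi⟩ := by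
  rw [adjSwap_eq hi]; exact Equiv.swap_apply_left _ _

lemma adjSwap_apply_snd {i : ℕ} (hi : i + 1 < n) :
    adjSwap n i ⟨i + 1, hi⟩ = ⟨i, Nat.lt_of_succ_lt hi⟩ := by
  rw [adjSwap_eq hi]; exact Equiv.swap_apply_right _ _

lemma adjSwap_apply_other {i : ℕ} (hi : i + 1 < n) (x : Fin n)
    (h1 : (x : ℕ) ≠ i) (h2 : (x : ℕ) ≠ i + 1) : adjSwap n i x = x := by
  rw [adjSwap_eq hi]
  exact Equiv.swap_apply_of_ne_of_ne (by simp [Fin.ext_iff, h1]) (by simp [Fin.ext_iff, h2])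

lemma swap_lt_iff {i : ℕ} (hi : i + 1 < n) (u v : Fin n) (huv : u ≠ v) :
    (adjSwap n i v < adjSwap n i u ↔
      (if (u = ⟨i, Nat.lt_of_succ_lt hi⟩ ∧ v = ⟨i + 1, hi⟩)
          ∨ (u = ⟨i + 1, hi⟩ ∧ v = ⟨i, Nat.lt_of_succ_lt hi⟩)
        then u < v else v < u)) := by
  rw [adjSwap_eq hi]
  rcases u with ⟨uv, hu⟩
  rcases v with ⟨vv, hv⟩
  have hne : uv ≠ vv := by simpa [Fin.ext_iff] using huv
  simp only [Equiv.swap_apply_def]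
  split_ifs <;> simp_all [Fin.lt_def, Fin.ext_iff] <;> omega

lemma permLen_succ_of {i : ℕ} (hi : i + 1 < n) (w : Equiv.Perm (Fin n))
    (h : w⁻¹ ⟨i, Nat.lt_of_succ_lt hi⟩ < w⁻¹ ⟨i + 1, hi⟩) :
    permLen (adjSwap n i * w) = permLen w + 1 := by
  have hwa : w (w⁻¹ ⟨i, Nat.lt_of_succ_lt hi⟩) = ⟨i, Nat.lt_of_succ_lt hi⟩ :=
    w.apply_symm_apply _
  have hwb : w (w⁻¹ ⟨i + 1, hi⟩) = ⟨i + 1, hi⟩ := w.apply_symm_apply _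
  have hAltB : (⟨i, Nat.lt_of_succ_lt hi⟩ : Fin n) < ⟨i + 1, hi⟩ := by
    rw [Fin.mk_lt_mk]; omega
  have hset : (Finset.univ.filter
      (fun p : Fin n × Fin n => p.1 < p.2 ∧ (adjSwap n i * w) p.2 < (adjSwap n i * w) p.1))
      = insert (w⁻¹ ⟨i, Nat.lt_of_succ_lt hi⟩, w⁻¹ ⟨i + 1, hi⟩) (Finset.univ.filter
      (fun p : Fin n × Fin n => p.1 < p.2 ∧ w p.2 < w p.1)) := by
    ext p
    rw [Finset.mem_filter]
    simp only [Finset.mem_insert, Finset.mem_filter, Finset.mem_univ, true_and,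
      Equiv.Perm.mul_apply]
    by_cases hp : p = (w⁻¹ ⟨i, Nat.lt_of_succ_lt hi⟩, w⁻¹ ⟨i + 1, hi⟩)
    · subst hp
      constructor
      · intro _
        exact Or.inl rfl
      · intro _
        refine ⟨h, ?_⟩
        show adjSwap n i (w (w⁻¹ ⟨i + 1, hi⟩)) < adjSwap n i (w (w⁻¹ ⟨i, Nat.lt_of_succ_lt hi⟩))
        rw [hwa, hwb, adjSwap_apply_fst hi, adjSwap_apply_snd hi]
        exact hAltB
    · simp only [hp, false_or]
      constructor
      · rintro ⟨h12, hlt⟩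
        refine ⟨h12, ?_⟩
        have hne : w p.1 ≠ w p.2 := fun hc => (ne_of_lt h12) (w.injective hc)
        rw [swap_lt_iff hi _ _ hne] at hlt
        split_ifs at hlt with hcase
        · exfalso
          rcases hcase with ⟨h1, h2⟩ | ⟨h1, h2⟩
          · apply hp
            have e1 := congrArg (⇑w⁻¹) h1
            have e2 := congrArg (⇑w⁻¹) h2
            rw [show ∀ x, w⁻¹ (w x) = x from w.symm_apply_apply] at e1 e2
            obtain ⟨p1, p2⟩ := p
            rw [Prod.mk.injEq]
            exact ⟨e1, e2⟩
          · have e1 := congrArg (⇑w⁻¹) h1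
            have e2 := congrArg (⇑w⁻¹) h2
            rw [show ∀ x, w⁻¹ (w x) = x from w.symm_apply_apply] at e1 e2
            rw [e1, e2] at h12
            exact absurd (h12.trans h) (lt_irrefl _)
        · exact hlt
      · rintro ⟨h12, hlt⟩
        refine ⟨h12, ?_⟩
        have hne : w p.1 ≠ w p.2 := fun hc => (ne_of_lt h12) (w.injective hc)
        rw [swap_lt_iff hi _ _ hne]
        split_ifs with hcase
        · exfalso
          rcases hcase with ⟨h1, h2⟩ | ⟨h1, h2⟩
          · rw [h1, h2] at hlt
            rw [Fin.mk_lt_mk] at hlt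
            omega
          · have e1 := congrArg (⇑w⁻¹) h1
            have e2 := congrArg (⇑w⁻¹) h2
            rw [show ∀ x, w⁻¹ (w x) = x from w.symm_apply_apply] at e1 e2
            rw [e1, e2] at h12
            exact absurd (h12.trans h) (lt_irrefl _)
        · exact hlt
  have hnotmem : (w⁻¹ ⟨i, Nat.lt_of_succ_lt hi⟩, w⁻¹ ⟨i + 1, hi⟩) ∉ (Finset.univ.filter
      (fun p : Fin n × Fin n => p.1 < p.2 ∧ w p.2 < w p.1)) := by
    simp only [Finset.mem_filter, Finset.mem_univ, true_and, not_and]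
    intro _
    show ¬ w (w⁻¹ ⟨i + 1, hi⟩) < w (w⁻¹ ⟨i, Nat.lt_of_succ_lt hi⟩)
    rw [hwa, hwb]
    intro hc
    rw [Fin.mk_lt_mk] at hc
    omega
  rw [permLen, permLen, hset, Finset.card_insert_of_notMem hnotmem]

lemma permLen_pred_of {i : ℕ} (hi : i + 1 < n) (w : Equiv.Perm (Fin n))
    (h : w⁻¹ ⟨i + 1, hi⟩ < w⁻¹ ⟨i, Nat.lt_of_succ_lt hi⟩) :
    permLen w = permLen (adjSwap n i * w) + 1 := by
  have h2 : (adjSwap n i * w)⁻¹ ⟨i, Nat.lt_of_succ_lt hi⟩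
      < (adjSwap n i * w)⁻¹ ⟨i + 1, hi⟩ := by
    rw [mul_inv_rev, adjSwap_inv, Equiv.Perm.mul_apply, Equiv.Perm.mul_apply,
      adjSwap_apply_fst hi, adjSwap_apply_snd hi]
    exact h
  have := permLen_succ_of hi (adjSwap n i * w) h2
  rw [← mul_assoc, adjSwap_mul_self, one_mul] at this
  exact this

lemma inv_adj_ne {i : ℕ} (hi : i + 1 < n) (w : Equiv.Perm (Fin n)) :
    w⁻¹ ⟨i, Nat.lt_of_succ_lt hi⟩ ≠ w⁻¹ ⟨i + 1, hi⟩ := by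
  intro hc
  have := w⁻¹.injective hc
  simp [Fin.ext_iff] at this

lemma descent_iff {i : ℕ} (hi : i + 1 < n) (w : Equiv.Perm (Fin n)) :
    permLen (adjSwap n i * w) < permLen w ↔
      w⁻¹ ⟨i + 1, hi⟩ < w⁻¹ ⟨i, Nat.lt_of_succ_lt hi⟩ := by
  rcases lt_or_gt_of_ne (inv_adj_ne hi w) with hlt | hgt
  · rw [permLen_succ_of hi w hlt]
    constructor
    · intro h'; omega
    · intro hcon; exact absurd hcon (not_lt_of_gt hlt)
  · rw [permLen_pred_of hi w hgt]
    constructor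
    · intro _; exact hgt
    · intro _; omega

lemma permLen_cases {i : ℕ} (hi : i + 1 < n) (w : Equiv.Perm (Fin n)) :
    permLen (adjSwap n i * w) = permLen w + 1 ∨ permLen w = permLen (adjSwap n i * w) + 1 := by
  rcases lt_or_gt_of_ne (inv_adj_ne hi w) with hlt | hgt
  · exact Or.inl (permLen_succ_of hi w hlt)
  · exact Or.inr (permLen_pred_of hi w hgt)

lemma permLen_one : permLen (1 : Equiv.Perm (Fin n)) = 0 := by
  rw [permLen, Finset.card_eq_zero, Finset.filter_eq_empty_iff]
  rintro p -
  rintro ⟨h1, h2⟩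
  simp only [Equiv.Perm.one_apply] at h2
  exact absurd (h1.trans h2) (lt_irrefl _)

lemma exists_descent {w : Equiv.Perm (Fin n)} (hw : w ≠ 1) :
    ∃ i, ∃ hi : i + 1 < n, w⁻¹ ⟨i + 1, hi⟩ < w⁻¹ ⟨i, Nat.lt_of_succ_lt hi⟩ := by
  by_contra hcon
  push_neg at hcon
  have hmono : ∀ (i : ℕ) (hi : i + 1 < n),
      w⁻¹ ⟨i, Nat.lt_of_succ_lt hi⟩ < w⁻¹ ⟨i + 1, hi⟩ := by
    intro i hi
    rcases lt_or_gt_of_ne (inv_adj_ne hi w) with hlt | hgt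
    · exact hlt
    · exact absurd hgt (not_lt.mpr (hcon i hi))
  apply hw
  have hn : ∀ x : Fin n, w⁻¹ x = x := by
    rcases n with _ | m
    · intro x; exact absurd x.2 (Nat.not_lt_zero _)
    · have hsm : StrictMono (⇑(w⁻¹) : Fin (m+1) → Fin (m+1)) := by
        rw [Fin.strictMono_iff_lt_succ]
        intro i
        have h1 : i.castSucc = (⟨i.val, by omega⟩ : Fin (m+1)) := by simp [Fin.ext_iff]
        have h2 : i.succ = (⟨i.val + 1, by omega⟩ : Fin (m+1)) := by simp [Fin.ext_iff]
        rw [h1, h2]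
        exact hmono i.val (by omega)
      have hid : (⇑(w⁻¹) : Fin (m+1) → Fin (m+1)) = id := by
        apply (hsm.range_inj strictMono_id).1
        rw [Set.range_id]
        exact (w⁻¹ : Equiv.Perm (Fin (m+1))).surjective.range_eq
      intro x
      rw [hid]; rfl
  have h1 : w⁻¹ = 1 := Equiv.ext fun x => hn x
  exact inv_eq_one.mp h1

end PermLen


section WordLemmas
variable {n : ℕ}

lemma demWord_cons (i : ℕ) (l : List ℕ) :
    demWord n (i :: l) = demAt n i ∘ demWord n l := rfl

lemma demWord_append (l1 l2 : List ℕ) :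
    demWord n (l1 ++ l2) = demWord n l1 ∘ demWord n l2 := by
  induction l1 with
  | nil => rfl
  | cons i l ih =>
      show demAt n i ∘ demWord n (l ++ l2) = _
      rw [ih]
      rfl

lemma permLen_prod_le (l : List ℕ) : permLen ((l.map (adjSwap n)).prod) ≤ l.length := by
  induction l with
  | nil => simp [permLen_one]
  | cons i m ih =>
      rw [List.map_cons, List.prod_cons]
      by_cases hi : i + 1 < n
      · rcases permLen_cases hi ((m.map (adjSwap n)).prod) with h | h <;>
          simp only [List.length_cons] <;> omega
      · rw [adjSwap, dif_neg hi, one_mul]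
        simp only [List.length_cons]
        omega

lemma exists_reduced_aux :
    ∀ (r : ℕ) (w : Equiv.Perm (Fin n)), permLen w ≤ r → ∃ l, IsReducedWord n w l := by
  intro r
  induction r with
  | zero =>
      intro w hw
      have hw0 : permLen w = 0 := Nat.le_zero.mp hw
      have hw1 : w = 1 := by
        by_contra hne
        obtain ⟨i, hi, hd⟩ := exists_descent hne
        have := permLen_pred_of hi w hd
        omega
      subst hw1
      exact ⟨[], fun i hi => absurd hi List.not_mem_nil, by simp, by simp [permLen_one]⟩
  | succ r ih =>
      intro w hw
      by_cases hr : permLen w ≤ r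
      · exact ih w hr
      · have hw1 : permLen w = r + 1 := by omega
        have hne : w ≠ 1 := by
          intro hc
          rw [hc, permLen_one] at hw1
          omega
        obtain ⟨i, hi, hd⟩ := exists_descent hne
        have hpred := permLen_pred_of hi w hd
        obtain ⟨m, hm1, hm2, hm3⟩ := ih (adjSwap n i * w) (by omega)
        refine ⟨i :: m, ?_, ?_, ?_⟩
        · intro j hj
          rcases List.mem_cons.mp hj with rfl | hj'
          · exact hi
          · exact hm1 j hj'
        · rw [List.map_cons, List.prod_cons, hm2, ← mul_assoc, adjSwap_mul_self, one_mul]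
        · simp only [List.length_cons, hm3]
          omega

lemma exists_reduced (w : Equiv.Perm (Fin n)) : ∃ l, IsReducedWord n w l :=
  exists_reduced_aux (permLen w) w le_rfl

lemma reduced_cons {w : Equiv.Perm (Fin n)} {l : List ℕ} (hred : IsReducedWord n w l)
    (hpos : 0 < permLen w) :
    ∃ j m, l = j :: m ∧ j + 1 < n ∧ IsReducedWord n (adjSwap n j * w) m ∧
      permLen (adjSwap n j * w) < permLen w := by
  obtain ⟨hlet, hprod, hlen⟩ := hred
  cases l with
  | nil =>
      rw [← hlen] at hpos
      simp at hpos
  | cons j m =>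
      have hj : j + 1 < n := hlet j List.mem_cons_self
      rw [List.map_cons, List.prod_cons] at hprod
      have hm : (m.map (adjSwap n)).prod = adjSwap n j * w := by
        rw [← hprod, ← mul_assoc, adjSwap_mul_self, one_mul]
      have hle : permLen ((m.map (adjSwap n)).prod) ≤ m.length := permLen_prod_le m
      have hlen' : m.length + 1 = permLen w := by simpa using hlen
      have hcase := permLen_cases hj (adjSwap n j * w)
      rw [← mul_assoc, adjSwap_mul_self, one_mul] at hcase
      rw [hm] at hle
      rcases hcase with h | h
      · exact ⟨j, m, rfl, hj,
          ⟨fun x hx => hlet x (List.mem_cons_of_mem j hx), hm, by omega⟩, by omega⟩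
      · omega

lemma inv_mul_adj (j : ℕ) (w : Equiv.Perm (Fin n)) (x : Fin n) :
    (adjSwap n j * w)⁻¹ x = w⁻¹ (adjSwap n j x) := by
  rw [mul_inv_rev, adjSwap_inv, Equiv.Perm.mul_apply]

lemma descent_far {i j : ℕ} (hi : i + 1 < n) (hj : j + 1 < n) (hfar : i + 1 < j ∨ j + 1 < i)
    (w : Equiv.Perm (Fin n)) (hd : permLen (adjSwap n i * w) < permLen w) :
    permLen (adjSwap n i * (adjSwap n j * w)) < permLen (adjSwap n j * w) := by
  rw [descent_iff hi] at hd ⊢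
  rw [inv_mul_adj, inv_mul_adj,
    adjSwap_apply_other hj _ (show i + 1 ≠ j by omega) (show i + 1 ≠ j + 1 by omega),
    adjSwap_apply_other hj _ (show i ≠ j by omega) (show i ≠ j + 1 by omega)]
  exact hd

lemma descent_adj1 {i j : ℕ} (hi : i + 1 < n) (hj : j + 1 < n) (hadj : i + 1 = j ∨ j + 1 = i)
    (w : Equiv.Perm (Fin n)) (hdi : permLen (adjSwap n i * w) < permLen w)
    (hdj : permLen (adjSwap n j * w) < permLen w) :
    permLen (adjSwap n i * (adjSwap n j * w)) < permLen (adjSwap n j * w) := by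
  rw [descent_iff hi] at hdi
  rw [descent_iff hj] at hdj
  rw [descent_iff hi, inv_mul_adj, inv_mul_adj]
  rcases hadj with h | h
  · subst h
    have e1 : adjSwap n (i + 1) ⟨i + 1, hi⟩ = ⟨i + 1 + 1, hj⟩ := adjSwap_apply_fst hj
    have e2 : adjSwap n (i + 1) ⟨i, Nat.lt_of_succ_lt hi⟩ = ⟨i, Nat.lt_of_succ_lt hi⟩ :=
      adjSwap_apply_other hj _ (show i ≠ i + 1 by omega) (show i ≠ i + 1 + 1 by omega)
    rw [e1, e2]
    exact lt_trans hdj hdi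
  · subst h
    have e1 : adjSwap n j ⟨j + 1 + 1, hi⟩ = ⟨j + 1 + 1, hi⟩ :=
      adjSwap_apply_other hj _ (show j + 1 + 1 ≠ j by omega) (show j + 1 + 1 ≠ j + 1 by omega)
    have e2 : adjSwap n j ⟨j + 1, Nat.lt_of_succ_lt hi⟩ = ⟨j, Nat.lt_of_succ_lt hj⟩ :=
      adjSwap_apply_snd hj
    rw [e1, e2]
    exact lt_trans hdi hdj

lemma descent_adj2 {i j : ℕ} (hi : i + 1 < n) (hj : j + 1 < n) (hadj : i + 1 = j ∨ j + 1 = i)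
    (w : Equiv.Perm (Fin n)) (hdi : permLen (adjSwap n i * w) < permLen w)
    (hdj : permLen (adjSwap n j * w) < permLen w) :
    permLen (adjSwap n j * (adjSwap n i * (adjSwap n j * w)))
      < permLen (adjSwap n i * (adjSwap n j * w)) := by
  rw [descent_iff hi] at hdi
  rw [descent_iff hj] at hdj
  rw [descent_iff hj, inv_mul_adj, inv_mul_adj, inv_mul_adj, inv_mul_adj]
  rcases hadj with h | h
  · subst h
    have e1 : adjSwap n i ⟨i + 1 + 1, hj⟩ = ⟨i + 1 + 1, hj⟩ :=
      adjSwap_apply_other hi _ (show i + 1 + 1 ≠ i by omega) (show i + 1 + 1 ≠ i + 1 by omega)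
    have e2 : adjSwap n (i + 1) ⟨i + 1 + 1, hj⟩ = ⟨i + 1, Nat.lt_of_succ_lt hj⟩ :=
      adjSwap_apply_snd hj
    have e3 : adjSwap n i ⟨i + 1, Nat.lt_of_succ_lt hj⟩ = ⟨i, Nat.lt_of_succ_lt hi⟩ :=
      adjSwap_apply_snd hi
    have e4 : adjSwap n (i + 1) ⟨i, Nat.lt_of_succ_lt hi⟩ = ⟨i, Nat.lt_of_succ_lt hi⟩ :=
      adjSwap_apply_other hj _ (show i ≠ i + 1 by omega) (show i ≠ i + 1 + 1 by omega)
    rw [e1, e2, e3, e4]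
    exact hdi
  · subst h
    have e1 : adjSwap n (j + 1) ⟨j + 1, hj⟩ = ⟨j + 1 + 1, hi⟩ := adjSwap_apply_fst hi
    have e2 : adjSwap n j ⟨j + 1 + 1, hi⟩ = ⟨j + 1 + 1, hi⟩ :=
      adjSwap_apply_other hj _ (show j + 1 + 1 ≠ j by omega) (show j + 1 + 1 ≠ j + 1 by omega)
    have e3 : adjSwap n (j + 1) ⟨j, Nat.lt_of_succ_lt hj⟩ = ⟨j, Nat.lt_of_succ_lt hj⟩ :=
      adjSwap_apply_other hi _ (show j ≠ j + 1 by omega) (show j ≠ j + 1 + 1 by omega)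
    have e4 : adjSwap n j ⟨j, Nat.lt_of_succ_lt hj⟩ = ⟨j + 1, hj⟩ := adjSwap_apply_fst hj
    rw [e1, e2, e3, e4]
    exact hdi

lemma adjSwap_comm_mul {i k : ℕ} (h : i + 1 < k ∨ k + 1 < i) :
    adjSwap n i * adjSwap n k = adjSwap n k * adjSwap n i := by
  by_cases hi : i + 1 < n
  · by_cases hk : k + 1 < n
    · rw [adjSwap_eq hi, adjSwap_eq hk]
      refine Equiv.ext fun x => ?_
      simp only [Equiv.Perm.mul_apply]
      refine swap_fn_comm ?_ ?_ ?_ ?_ x <;> · simp only [ne_eq, Fin.mk.injEq]; omega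
    · rw [show adjSwap n k = 1 from dif_neg hk, mul_one, one_mul]
  · rw [show adjSwap n i = 1 from dif_neg hi, mul_one, one_mul]

lemma adjSwap_braid_mul {a : ℕ} (ha : a + 2 < n) :
    adjSwap n a * adjSwap n (a + 1) * adjSwap n a
      = adjSwap n (a + 1) * adjSwap n a * adjSwap n (a + 1) := by
  have ha1 : a + 1 < n := by omega
  have ha2 : a + 1 + 1 < n := ha
  rw [adjSwap_eq ha1, adjSwap_eq ha2]
  refine Equiv.ext fun x => ?_
  simp only [Equiv.Perm.mul_apply]
  exact swap_fn_braid (a := (⟨a, by omega⟩ : Fin n)) (b := ⟨a + 1, ha1⟩) (c := ⟨a + 1 + 1, ha2⟩)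
    (by simp only [ne_eq, Fin.mk.injEq]; omega)
    (by simp only [ne_eq, Fin.mk.injEq]; omega)
    (by simp only [ne_eq, Fin.mk.injEq]; omega) x

theorem demRel (n : ℕ) : ∀ r : ℕ,
    (∀ w : Equiv.Perm (Fin n), permLen w ≤ r → ∀ (i : ℕ), i + 1 < n →
      permLen (adjSwap n i * w) < permLen w →
      ∀ l m : List ℕ, IsReducedWord n w l → IsReducedWord n (adjSwap n i * w) m →
      demWord n l = demAt n i ∘ demWord n m) ∧
    (∀ w : Equiv.Perm (Fin n), permLen w ≤ r →
      ∀ l l' : List ℕ, IsReducedWord n w l → IsReducedWord n w l' →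
      demWord n l = demWord n l') := by
  intro r
  induction r with
  | zero =>
      constructor
      · intro w hw i hi hd l m hl hm
        exact absurd hd (by omega)
      · intro w hw l l' hl hl'
        have h1 : l.length = 0 := by have := hl.2.2; omega
        have h2 : l'.length = 0 := by have := hl'.2.2; omega
        rw [List.length_eq_zero_iff] at h1 h2
        rw [h1, h2]
  | succ r ih =>
      obtain ⟨ihT, ihU⟩ := ih
      have T : ∀ w : Equiv.Perm (Fin n), permLen w ≤ r + 1 → ∀ (i : ℕ), i + 1 < n →
          permLen (adjSwap n i * w) < permLen w →
          ∀ l m : List ℕ, IsReducedWord n w l → IsReducedWord n (adjSwap n i * w) m →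
          demWord n l = demAt n i ∘ demWord n m := by
        intro w hw i hi hd l m hl hm
        by_cases hwr : permLen w ≤ r
        · exact ihT w hwr i hi hd l m hl hm
        have hw1 : permLen w = r + 1 := by omega
        obtain ⟨j, l₁, rfl, hj, hl₁, hdj⟩ := reduced_cons hl (by omega)
        have hlj : permLen (adjSwap n j * w) ≤ r := by omega
        have hli : permLen (adjSwap n i * w) ≤ r := by omega
        rw [demWord_cons]
        by_cases hij : i = j
        · subst hij
          rw [ihU (adjSwap n i * w) hlj l₁ m hl₁ hm]
        rcases (show (i + 1 = j ∨ j + 1 = i) ∨ (i + 1 < j ∨ j + 1 < i) by omega) with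
          hadj | hfar
        · -- braid case
          have dji := descent_adj1 hi hj hadj w hd hdj
          have dij := descent_adj1 hj hi (by omega) w hdj hd
          have dj2 := descent_adj2 hi hj hadj w hd hdj
          have di2 := descent_adj2 hj hi (by omega) w hdj hd
          obtain ⟨k2, hk2⟩ := exists_reduced (adjSwap n i * (adjSwap n j * w))
          obtain ⟨k3, hk3⟩ := exists_reduced (adjSwap n j * (adjSwap n i * (adjSwap n j * w)))
          obtain ⟨k2', hk2'⟩ := exists_reduced (adjSwap n j * (adjSwap n i * w))
          have e1 : demWord n l₁ = demAt n i ∘ demWord n k2 :=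
            ihT _ hlj i hi dji l₁ k2 hl₁ hk2
          have e2 : demWord n k2 = demAt n j ∘ demWord n k3 :=
            ihT _ (by omega) j hj dj2 k2 k3 hk2 hk3
          have hgrp : adjSwap n i * (adjSwap n j * (adjSwap n i * w))
              = adjSwap n j * (adjSwap n i * (adjSwap n j * w)) := by
            rcases hadj with h | h
            · subst h
              rw [← mul_assoc, ← mul_assoc, ← mul_assoc, ← mul_assoc,
                adjSwap_braid_mul (show i + 2 < n from hj)]
            · subst h
              rw [← mul_assoc, ← mul_assoc, ← mul_assoc, ← mul_assoc,
                ← adjSwap_braid_mul (show j + 2 < n from hi)]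
          have hk3' : IsReducedWord n (adjSwap n i * (adjSwap n j * (adjSwap n i * w))) k3 := by
            rw [hgrp]
            exact hk3
          have e3 : demWord n m = demAt n j ∘ demWord n k2' :=
            ihT _ hli j hj dij m k2' hm hk2'
          have e4 : demWord n k2' = demAt n i ∘ demWord n k3 :=
            ihT _ (by omega) i hi di2 k2' k3 hk2' hk3'
          rw [e1, e2, e3, e4]
          funext f
          rcases hadj with h | h
          · subst h
            exact (demAt_braid i (demWord n k3 f)).symm
          · subst h
            exact demAt_braid j (demWord n k3 f)
        · -- far case
          have dji := descent_far hi hj hfar w hd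
          have dij := descent_far hj hi (by omega) w hdj
          obtain ⟨k2, hk2⟩ := exists_reduced (adjSwap n i * (adjSwap n j * w))
          have e1 : demWord n l₁ = demAt n i ∘ demWord n k2 :=
            ihT _ hlj i hi dji l₁ k2 hl₁ hk2
          have hgrp : adjSwap n j * (adjSwap n i * w) = adjSwap n i * (adjSwap n j * w) := by
            rw [← mul_assoc, ← mul_assoc, adjSwap_comm_mul (show j + 1 < i ∨ i + 1 < j by omega)]
          have hk2c : IsReducedWord n (adjSwap n j * (adjSwap n i * w)) k2 := by
            rw [hgrp]
            exact hk2
          have e3 : demWord n m = demAt n j ∘ demWord n k2 :=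
            ihT _ hli j hj dij m k2 hm hk2c
          rw [e1, e3]
          funext f
          exact demAt_comm (by omega) (demWord n k2 f)
      have U : ∀ w : Equiv.Perm (Fin n), permLen w ≤ r + 1 →
          ∀ l l' : List ℕ, IsReducedWord n w l → IsReducedWord n w l' →
          demWord n l = demWord n l' := by
        intro w hw l l' hl hl'
        by_cases hwr : permLen w ≤ r
        · exact ihU w hwr l l' hl hl'
        obtain ⟨j, l₁, rfl, hj, hl₁, hdj⟩ := reduced_cons hl (by omega)
        rw [T w hw j hj hdj l' l₁ hl' hl₁, demWord_cons]
      exact ⟨T, U⟩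

lemma demWord_nonreduced : ∀ (l : List ℕ), (∀ i ∈ l, i + 1 < n) →
    permLen ((l.map (adjSwap n)).prod) < l.length → demWord n l = fun _ => 0 := by
  intro l
  induction l with
  | nil =>
      intro _ h
      simp [permLen_one] at h
  | cons i m ih =>
      intro hlet hlen
      have hi : i + 1 < n := hlet i List.mem_cons_self
      rw [List.map_cons, List.prod_cons, List.length_cons] at hlen
      funext f
      rw [demWord_cons]
      show demAt n i (demWord n m f) = 0
      by_cases hm : permLen ((m.map (adjSwap n)).prod) < m.length
      · rw [ih (fun x hx => hlet x (List.mem_cons_of_mem i hx)) hm]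
        exact demAt_zero i
      · have hlen2 : m.length = permLen ((m.map (adjSwap n)).prod) :=
          le_antisymm (not_lt.mp hm) (permLen_prod_le m)
        have hred : IsReducedWord n ((m.map (adjSwap n)).prod) m :=
          ⟨fun x hx => hlet x (List.mem_cons_of_mem i hx), rfl, hlen2⟩
        have hdesc : permLen (adjSwap n i * (m.map (adjSwap n)).prod)
            < permLen ((m.map (adjSwap n)).prod) := by
          rcases permLen_cases hi ((m.map (adjSwap n)).prod) with h | h <;> omega
        obtain ⟨m', hm'⟩ := exists_reduced (adjSwap n i * (m.map (adjSwap n)).prod)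
        rw [(demRel n (permLen ((m.map (adjSwap n)).prod))).1 _ le_rfl i hi hdesc m m' hred hm']
        show demAt n i (demAt n i (demWord n m' f)) = 0
        exact demAt_demAt i (demWord n m' f)

end WordLemmas


/-- If `ℓ(uv) = ℓ(u) + ℓ(v)` then `∂_u ∘ ∂_v = ∂_{uv}`; if `ℓ(uv) < ℓ(u) + ℓ(v)` then
`∂_u ∘ ∂_v = 0`. -/
theorem demazure_comp (n : ℕ) (hn : 1 ≤ n) (u v : Equiv.Perm (Fin n)) :
    (permLen (u * v) = permLen u + permLen v →
      demazureOf n u ∘ demazureOf n v = demazureOf n (u * v)) ∧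
    (permLen (u * v) < permLen u + permLen v →
      demazureOf n u ∘ demazureOf n v = fun _ => 0) := by
  have hexu := exists_reduced (n := n) u
  have hexv := exists_reduced (n := n) v
  have hexuv := exists_reduced (n := n) (u * v)
  obtain ⟨u1, u2, u3⟩ := hexu.choose_spec
  obtain ⟨v1, v2, v3⟩ := hexv.choose_spec
  constructor
  · intro h
    simp only [demazureOf]
    rw [dif_pos hexu, dif_pos hexv, dif_pos hexuv]
    have hred : IsReducedWord n (u * v) (hexu.choose ++ hexv.choose) := by
      refine ⟨?_, ?_, ?_⟩
      · intro x hx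
        rcases List.mem_append.mp hx with h' | h'
        · exact u1 x h'
        · exact v1 x h'
      · rw [List.map_append, List.prod_append, u2, v2]
      · rw [List.length_append, u3, v3, h]
    rw [← demWord_append]
    exact (demRel n (permLen (u * v))).2 (u * v) le_rfl _ _ hred hexuv.choose_spec
  · intro h
    simp only [demazureOf]
    rw [dif_pos hexu, dif_pos hexv]
    rw [← demWord_append]
    apply demWord_nonreduced
    · intro x hx
      rcases List.mem_append.mp hx with h' | h'
      · exact u1 x h'
      · exact v1 x h'
    · rw [List.map_append, List.prod_append, u2, v2, List.length_append, u3, v3]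
      exact h
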